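/- Let (W,S) be a Coxeter system, u, v ∈ W with u ≤ v, and v̲ a reduced expression for v. Then there is exactly one leaf in L_{v̲}(u) of degree ℓ(v) − ℓ(u). -/

import Mathlib

open CoxeterSystem

variable {B : Type*} {W : Type*} [Group W] {M : CoxeterMatrix B}

/-- The Bruhat order on a Coxeter group: `x ≤ y` iff there is a chain from `x` to `y`
each step of which multiplies on the right by a reflection and strictly increases length. -/
def bruhatLE (cs : CoxeterSystem M W) (x y : W) : Prop :=
  Relation.ReflTransGen
    (fun a b => (∃ t : W, cs.IsReflection t ∧ b = a * t) ∧ cs.length a < cs.length b) x y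

/-- The strict Bruhat order. -/
def bruhatLT (cs : CoxeterSystem M W) (x y : W) : Prop :=
  Relation.TransGen
    (fun a b => (∃ t : W, cs.IsReflection t ∧ b = a * t) ∧ cs.length a < cs.length b) x y

/-- The subword of `ω` selected by a list of Booleans. -/
def selectedWord : List B → List Bool → List B
  | s :: l, true :: e => s :: selectedWord l e
  | _ :: l, false :: e => selectedWord l e
  | _, _ => []

/-- The element of `W` obtained by multiplying the letters of `ω` selected by `e`. -/
def subwordProd (cs : CoxeterSystem M W) (ω : List B) (e : List Bool) : W :=
  cs.wordProd (selectedWord ω e)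

/-- Light leaves of the Bott–Samelson bimodule `BS(ω)` with target `u` are indexed by
the 01-sequences (subexpressions) of `ω` whose selected subword multiplies to `u`. -/
def CLeaf (cs : CoxeterSystem M W) (ω : List B) (u : W) : Type _ :=
  {e : Fin ω.length → Bool // subwordProd cs ω (List.ofFn e) = u}

instance (cs : CoxeterSystem M W) (ω : List B) (u : W) [DecidableEq W] :
    Fintype (CLeaf cs ω u) := by
  unfold CLeaf; infer_instance

/-- Number of morphisms of type `m_s` used in the construction of the light leaf indexed
by `e` (with partial product accumulated in the first argument). -/
noncomputable def nmAux (cs : CoxeterSystem M W) : W → List B → List Bool → ℕ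
  | x, s :: l, b :: e =>
      (if cs.length (x * cs.simple s) = cs.length x + 1
        then (if b then 0 else 1) else (if b then 1 else 0))
      + nmAux cs (if b then x * cs.simple s else x) l e
  | _, _, _ => 0

/-- Number of morphisms of type `j_s` used in the construction of the light leaf indexed
by `e`. -/
noncomputable def njAux (cs : CoxeterSystem M W) : W → List B → List Bool → ℕ
  | x, s :: l, b :: e =>
      (if cs.length (x * cs.simple s) = cs.length x + 1 then 0 else 1)
      + njAux cs (if b then x * cs.simple s else x) l e
  | _, _, _ => 0

/-- `n_m(l)` for a light leaf `l ∈ L_ω(u)`. -/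
noncomputable def leafNm (cs : CoxeterSystem M W) (ω : List B) {u : W} (l : CLeaf cs ω u) : ℕ :=
  nmAux cs 1 ω (List.ofFn l.1)

/-- `n_j(l)` for a light leaf `l ∈ L_ω(u)`. -/
noncomputable def leafNj (cs : CoxeterSystem M W) (ω : List B) {u : W} (l : CLeaf cs ω u) : ℕ :=
  njAux cs 1 ω (List.ofFn l.1)

/-- The degree of the light leaf indexed by `e`: `deg l = n_m(l) - n_j(l)`. -/
noncomputable def leafDeg (cs : CoxeterSystem M W) (ω : List B) {u : W} (l : CLeaf cs ω u) : ℤ :=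
  (leafNm cs ω l : ℤ) - (leafNj cs ω l : ℤ)


/-!
STATEMENT 9: Let (W,S) be a Coxeter system, u, v ∈ W with u ≤ v, and v̲ a reduced
expression for v.  Then there is exactly one light leaf in L_{v̲}(u) of degree
ℓ(v) − ℓ(u).

Light leaves of `BS(v̲)` with target `u` are indexed by the subexpressions `e` of `v̲`
whose product is `u`; the degree of a leaf is `n_m − n_j`, where `n_m` (resp. `n_j`)
counts the occurrences of morphisms of type `m_s` (resp. `j_s`) in its construction,
as recorded by the functions `leafNm`, `leafNj`, `leafDeg` below.
-/


namespace LLAux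
open List
variable {B W : Type*} [Group W] {M : CoxeterMatrix B} (cs : CoxeterSystem M W)

lemma simple_conj_eq_iff (i : B) (a : W) :
    cs.simple i * a * cs.simple i = cs.simple i ↔ a = cs.simple i := by
  constructor
  · intro h
    have := congrArg (fun x => cs.simple i * x * cs.simple i) h
    simpa [← mul_assoc, cs.simple_mul_simple_cancel_right,
      cs.simple_mul_simple_cancel_left, mul_assoc] using this
  · rintro rfl
    rw [cs.simple_mul_simple_self, one_mul]

open Classical in
noncomputable def refPerm (i : B) : Equiv.Perm (W × ℤˣ) :=
  Function.Involutive.toPerm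
    (fun p => (cs.simple i * p.1 * cs.simple i, if p.1 = cs.simple i then -p.2 else p.2))
    (by
      rintro ⟨a, ε⟩
      simp only [simple_conj_eq_iff]
      have : cs.simple i * (cs.simple i * a * cs.simple i) * cs.simple i = a := by
        simp [← mul_assoc, cs.simple_mul_simple_cancel_right]
      rw [this]
      by_cases h : a = cs.simple i <;> simp [h])

open Classical in
lemma refPerm_apply (i : B) (p : W × ℤˣ) :
    refPerm cs i p = (cs.simple i * p.1 * cs.simple i,
      if p.1 = cs.simple i then -p.2 else p.2) := rfl

open Classical in
noncomputable def nsign (t : W) (L : List W) : ℤˣ :=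
  (L.map fun r => if t = r then (-1 : ℤˣ) else 1).prod

lemma nsign_nil (t : W) : nsign t [] = 1 := rfl

open Classical in
lemma nsign_cons (t r : W) (L : List W) :
    nsign t (r :: L) = (if t = r then (-1:ℤˣ) else 1) * nsign t L := by
  simp [nsign]

lemma nsign_of_not_mem {t : W} {L : List W} (h : t ∉ L) : nsign t L = 1 := by
  induction L with
  | nil => rfl
  | cons r L ih =>
    rw [nsign_cons, if_neg (by simp at h; exact h.1), one_mul]
    exact ih (by simp at h; exact h.2)

lemma prodPerm_apply (L : List B) (t : W) (ε : ℤˣ) :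
    ((L.map (refPerm cs)).prod) (t, ε) =
      (cs.wordProd L * t * (cs.wordProd L)⁻¹, nsign t (cs.rightInvSeq L) * ε) := by
  classical
  induction L generalizing t ε with
  | nil => simp [nsign_nil]
  | cons i L ih =>
    have : ((((i :: L).map (refPerm cs))).prod) (t, ε)
        = (refPerm cs i) (((L.map (refPerm cs)).prod) (t, ε)) := by
      simp [List.prod_cons, Equiv.Perm.mul_apply]
    rw [this, ih, refPerm_apply]
    have hrs : cs.rightInvSeq (i :: L)
        = ((cs.wordProd L)⁻¹ * cs.simple i * cs.wordProd L) :: cs.rightInvSeq L := rfl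
    rw [hrs, nsign_cons]
    have hcond : (cs.wordProd L * t * (cs.wordProd L)⁻¹ = cs.simple i)
        ↔ (t = (cs.wordProd L)⁻¹ * cs.simple i * cs.wordProd L) := by
      constructor
      · intro h; rw [← h]; group
      · intro h; rw [h]; group
    dsimp only
    rw [Prod.mk.injEq]
    refine ⟨?_, ?_⟩
    · rw [cs.wordProd_cons, mul_inv_rev, cs.inv_simple]
      group
    · by_cases h : t = (cs.wordProd L)⁻¹ * cs.simple i * cs.wordProd L
      · rw [if_pos (hcond.mpr h), if_pos h]
        simp [mul_assoc]
      · rw [if_neg (fun hh => h (hcond.mp hh)), if_neg h, one_mul]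



lemma simple_shift_pow (i j : B) (k : ℕ) :
    cs.simple j * (cs.simple i * cs.simple j) ^ k
      = (cs.simple j * cs.simple i) ^ k * cs.simple j := by
  induction k with
  | zero => simp
  | succ k ih =>
    rw [pow_succ, ← mul_assoc, ← mul_assoc, ih, pow_succ]
    group

lemma tval_eq (i j : B) (n : ℕ) :
    (cs.wordProd (alternatingWord i j n))⁻¹ * cs.simple (if Even n then j else i)
      * cs.wordProd (alternatingWord i j n)
      = (cs.simple j * cs.simple i) ^ n * cs.simple j := by
  rcases Nat.even_or_odd n with he | ho
  · obtain ⟨k, rfl⟩ := he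
    have hp : cs.wordProd (alternatingWord i j (k + k))
        = (cs.simple i * cs.simple j) ^ k := by
      rw [cs.prod_alternatingWord_eq_mul_pow]
      simp [Nat.add_mul_div_left, (by omega : (k + k) / 2 = k)]
    rw [hp, if_pos (by exact ⟨k, rfl⟩)]
    have hinv : ((cs.simple i * cs.simple j) ^ k)⁻¹ = (cs.simple j * cs.simple i) ^ k := by
      rw [← inv_pow, mul_inv_rev, cs.inv_simple, cs.inv_simple]
    rw [hinv, mul_assoc, simple_shift_pow, ← mul_assoc, ← pow_add]
  · obtain ⟨k, rfl⟩ := ho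
    have hp : cs.wordProd (alternatingWord i j (2 * k + 1))
        = cs.simple j * (cs.simple i * cs.simple j) ^ k := by
      rw [cs.prod_alternatingWord_eq_mul_pow]
      simp [Nat.even_add_one, Nat.mul_div_cancel_left, (by omega : (2 * k + 1) / 2 = k)]
    rw [hp, if_neg (by simp [Nat.even_add_one, parity_simps])]
    have hinv : (cs.simple j * (cs.simple i * cs.simple j) ^ k)⁻¹
        = (cs.simple j * cs.simple i) ^ k * cs.simple j := by
      simp [mul_inv_rev, ← inv_pow, cs.inv_simple]
    rw [hinv]
    calc (cs.simple j * cs.simple i) ^ k * cs.simple j * cs.simple i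
          * (cs.simple j * (cs.simple i * cs.simple j) ^ k)
        = (cs.simple j * cs.simple i) ^ k * (cs.simple j * cs.simple i)
          * (cs.simple j * (cs.simple i * cs.simple j) ^ k) := by group
      _ = (cs.simple j * cs.simple i) ^ (k+1) * ((cs.simple j * cs.simple i) ^ k * cs.simple j) := by
          rw [pow_succ, simple_shift_pow]
      _ = (cs.simple j * cs.simple i) ^ (2 * k + 1) * cs.simple j := by
          rw [← mul_assoc, ← pow_add]; congr 2; omega

lemma risA (i j : B) (N : ℕ) :
    cs.rightInvSeq (alternatingWord i j N)
      = ((List.range N).reverse).map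
          (fun n => (cs.simple j * cs.simple i) ^ n * cs.simple j) := by
  induction N with
  | zero => simp [CoxeterSystem.alternatingWord]
  | succ N ih =>
    rw [CoxeterSystem.alternatingWord_succ']
    show ((cs.wordProd (alternatingWord i j N))⁻¹ * cs.simple _
        * cs.wordProd (alternatingWord i j N)) :: cs.rightInvSeq (alternatingWord i j N) = _
    rw [ih, tval_eq, List.range_succ, List.reverse_append]
    simp

open Classical in
lemma nsign_map_reverse (t : W) (f : ℕ → W) (l : List ℕ) :
    nsign t ((l.reverse).map f) = nsign t (l.map f) := by
  unfold nsign
  rw [List.map_map, List.map_map, List.map_reverse, List.prod_reverse]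

lemma nsign_append (t : W) (L₁ L₂ : List W) :
    nsign t (L₁ ++ L₂) = nsign t L₁ * nsign t L₂ := by
  unfold nsign
  rw [List.map_append, List.prod_append]

lemma nsign_risA (i j : B) (t : W) :
    nsign t (cs.rightInvSeq (alternatingWord i j (2 * M i j))) = 1 := by
  classical
  rw [risA, nsign_map_reverse]
  have hper : ∀ n : ℕ, (cs.simple j * cs.simple i) ^ (M i j + n) * cs.simple j
      = (cs.simple j * cs.simple i) ^ n * cs.simple j := by
    intro n
    rw [pow_add, cs.simple_mul_simple_pow' i j, one_mul]
  rw [two_mul, List.range_add, List.map_append, nsign_append]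
  have : (List.map (fun k => M i j + k) (List.range (M i j))).map
      (fun n => (cs.simple j * cs.simple i) ^ n * cs.simple j)
      = (List.range (M i j)).map (fun n => (cs.simple j * cs.simple i) ^ n * cs.simple j) := by
    rw [List.map_map]
    exact List.map_congr_left (fun n _ => hper n)
  rw [this]
  exact Int.units_mul_self _

lemma refPerm_liftable : CoxeterMatrix.IsLiftable M (refPerm cs) := by
  intro i j
  have key : ∀ m : ℕ, (refPerm cs i * refPerm cs j) ^ m
      = ((alternatingWord i j (2 * m)).map (refPerm cs)).prod := by
    intro m
    induction m with
    | zero => simp [CoxeterSystem.alternatingWord]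
    | succ m ih =>
      have h2 : alternatingWord i j (2 * (m + 1))
          = i :: j :: alternatingWord i j (2 * m) := by
        have e1 : 2 * (m + 1) = (2 * m + 1) + 1 := by omega
        rw [e1, CoxeterSystem.alternatingWord_succ', CoxeterSystem.alternatingWord_succ']
        simp [Nat.even_add_one, parity_simps]
      rw [h2, pow_succ']
      simp only [List.map_cons, List.prod_cons, ih]
      rw [← mul_assoc]
  rw [key]
  apply Equiv.ext
  rintro ⟨t, ε⟩
  rw [prodPerm_apply]
  have hπ : cs.wordProd (alternatingWord i j (2 * M i j)) = 1 := by
    rw [cs.prod_alternatingWord_eq_mul_pow]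
    simp [Nat.mul_div_cancel_left, cs.simple_mul_simple_pow]
  rw [hπ, nsign_risA]
  simp

noncomputable def rho : W →* Equiv.Perm (W × ℤˣ) := cs.lift ⟨refPerm cs, refPerm_liftable cs⟩

lemma rho_simple (i : B) : rho cs (cs.simple i) = refPerm cs i :=
  cs.lift_apply_simple (refPerm_liftable cs) i

lemma rho_word (L : List B) : rho cs (cs.wordProd L) = (L.map (refPerm cs)).prod := by
  unfold CoxeterSystem.wordProd
  rw [MonoidHom.map_list_prod, List.map_map]
  congr 1
  exact List.map_congr_left fun i _ => rho_simple cs i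

noncomputable def eta (w t : W) : ℤˣ := ((rho cs w) (t, 1)).2

lemma eta_word (L : List B) (t : W) :
    eta cs (cs.wordProd L) t = nsign t (cs.rightInvSeq L) := by
  unfold eta
  rw [rho_word, prodPerm_apply, mul_one]

lemma rho_apply (w t : W) (ε : ℤˣ) :
    rho cs w (t, ε) = (w * t * w⁻¹, eta cs w t * ε) := by
  obtain ⟨L, rfl⟩ := cs.wordProd_surjective w
  rw [rho_word, prodPerm_apply, eta_word]

lemma eta_mul (x y t : W) : eta cs (x * y) t = eta cs x (y * t * y⁻¹) * eta cs y t := by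
  unfold eta
  rw [map_mul, Equiv.Perm.mul_apply, rho_apply, rho_apply, rho_apply]
  simp

lemma eta_one (t : W) : eta cs 1 t = 1 := by
  unfold eta
  rw [map_one]
  rfl

open Classical in
lemma eta_simple (i : B) (t : W) :
    eta cs (cs.simple i) t = if t = cs.simple i then -1 else 1 := by
  have := eta_word cs [i] t
  rw [cs.wordProd_singleton] at this
  rw [this, CoxeterSystem.rightInvSeq_singleton, nsign_cons, nsign_nil, mul_one]

lemma eta_refl_aux : ∀ (L : List B) (i : B),
    eta cs (cs.wordProd L * cs.simple i * (cs.wordProd L)⁻¹)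
      (cs.wordProd L * cs.simple i * (cs.wordProd L)⁻¹) = -1 := by
  classical
  intro L
  induction L with
  | nil =>
    intro i
    simp [eta_simple]
  | cons j L ih =>
    intro i
    set r := cs.wordProd L * cs.simple i * (cs.wordProd L)⁻¹ with hr
    have ht : cs.wordProd (j :: L) * cs.simple i * (cs.wordProd (j :: L))⁻¹
        = cs.simple j * r * cs.simple j := by
      rw [cs.wordProd_cons, mul_inv_rev, cs.inv_simple, hr]
      group
    rw [ht]
    have h1 : cs.simple j * r * cs.simple j = (cs.simple j * r) * cs.simple j := by group
    rw [h1, eta_mul]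
    have h2 : cs.simple j * (cs.simple j * r * cs.simple j) * (cs.simple j)⁻¹ = r := by
      rw [cs.inv_simple]
      simp [← mul_assoc, cs.simple_mul_simple_cancel_right, cs.simple_mul_simple_cancel_left,
        mul_assoc, cs.simple_mul_simple_self]
    rw [h2, eta_mul]
    have h3 : r * r * r⁻¹ = r := by group
    rw [h3, ih i]
    have h4 : (cs.simple j * r * cs.simple j = cs.simple j) ↔ (r = cs.simple j) :=
      simple_conj_eq_iff cs j r
    rw [eta_simple, eta_simple]
    by_cases h : r = cs.simple j
    · rw [if_pos h, if_pos (h4.mpr h)]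
      decide
    · rw [if_neg h, if_neg (fun hh => h (h4.mp hh))]
      decide

lemma eta_refl {t : W} (ht : cs.IsReflection t) : eta cs t t = -1 := by
  obtain ⟨w, i, rfl⟩ := ht
  obtain ⟨L, rfl⟩ := cs.wordProd_surjective w
  exact eta_refl_aux cs L i

lemma eta_neg_iff : ∀ (n : ℕ) (w : W), cs.length w = n → ∀ t : W, cs.IsReflection t →
    (eta cs w t = -1 ↔ cs.length (w * t) < cs.length w) := by
  intro n
  induction n using Nat.strong_induction_on with
  | _ n IH =>
    intro w hw t ht
    rcases lt_or_gt_of_ne (ht.length_mul_left_ne w) with hlt | hgt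
    · have hu : w = (w * t) * t := by rw [mul_assoc, ht.mul_self, mul_one]
      have h1 : eta cs w t = eta cs (w * t) t * eta cs t t := by
        nth_rw 1 [hu]
        rw [eta_mul]
        congr 2
        exact mul_inv_cancel_right t t
      have h2 : eta cs (w * t) t = 1 := by
        have hiff := IH (cs.length (w * t)) (hw ▸ hlt) (w * t) rfl t ht
        have : ¬ cs.length ((w * t) * t) < cs.length (w * t) := by
          rw [← hu]; omega
        rcases Int.units_eq_one_or (eta cs (w * t) t) with h | h
        · exact h
        · exact absurd (hiff.mp h) this
      rw [h1, h2, eta_refl cs ht, one_mul]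
      simp [hlt]
    · have key : eta cs w t = 1 := by
        by_cases hw1 : w = 1
        · rw [hw1, eta_one]
        · obtain ⟨i, hdesc⟩ := cs.exists_rightDescent_of_ne_one hw1
          have hvlen : cs.length (w * cs.simple i) + 1 = cs.length w := by
            rcases cs.length_mul_simple w i with h | h
            · exact absurd hdesc (by unfold CoxeterSystem.IsRightDescent; omega)
            · exact h
          have hti : t ≠ cs.simple i := by
            rintro rfl
            unfold CoxeterSystem.IsRightDescent at hdesc
            omega
          have hw' : w = (w * cs.simple i) * cs.simple i :=
            (cs.simple_mul_simple_cancel_right i).symm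
          set v := w * cs.simple i with hv
          have h1 : eta cs w t
              = eta cs v (cs.simple i * t * cs.simple i) * eta cs (cs.simple i) t := by
            nth_rw 1 [hw']
            rw [eta_mul, cs.inv_simple]
          rw [eta_simple, if_neg hti, mul_one] at h1
          set t' := cs.simple i * t * cs.simple i with ht'def
          have ht' : cs.IsReflection t' := by
            have := ht.conj (cs.simple i)
            rwa [cs.inv_simple] at this
          have hiff := IH (cs.length v) (by omega) v rfl t' ht'
          have hvt' : v * t' = w * t * cs.simple i := by
            rw [hv, ht'def]
            simp [mul_assoc, cs.simple_mul_simple_cancel_left]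
          have hnot : ¬ cs.length (v * t') < cs.length v := by
            intro hcon
            have hle : cs.length (w * t) ≤ cs.length (w * t * cs.simple i) + 1 := by
              rcases cs.length_mul_simple (w * t) i with h | h <;> omega
            rw [hvt'] at hcon
            omega
          rcases Int.units_eq_one_or (eta cs v t') with h | h
          · rw [h1, h]
          · exact absurd (hiff.mp h) hnot
      rw [key]
      constructor
      · intro h; exact absurd h (by decide)
      · omega

lemma strong_exchange (L : List B) (t : W) (ht : cs.IsReflection t)
    (hlt : cs.length (cs.wordProd L * t) < cs.length (cs.wordProd L)) :
    ∃ j, j < L.length ∧ cs.wordProd (L.eraseIdx j) = cs.wordProd L * t := by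
  have heta : eta cs (cs.wordProd L) t = -1 :=
    (eta_neg_iff cs (cs.length (cs.wordProd L)) (cs.wordProd L) rfl t ht).mpr hlt
  rw [eta_word] at heta
  have hmem : t ∈ cs.rightInvSeq L := by
    by_contra hmem
    rw [nsign_of_not_mem hmem] at heta
    exact absurd heta (by decide)
  obtain ⟨j, hj, hjt⟩ := List.getElem_of_mem hmem
  have hjL : j < L.length := by
    rwa [CoxeterSystem.length_rightInvSeq] at hj
  refine ⟨j, hjL, ?_⟩
  have : (cs.rightInvSeq L).getD j 1 = t := by
    rw [List.getD_eq_getElem _ _ hj, hjt]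
  rw [← this, cs.wordProd_mul_getD_rightInvSeq]


variable (cs : CoxeterSystem M W)

lemma selectedWord_nil_right : ∀ (ω : List B), selectedWord ω ([] : List Bool) = [] := by
  intro ω; cases ω <;> rfl

lemma selectedWord_cons_true (s : B) (l : List B) (e : List Bool) :
    selectedWord (s :: l) (true :: e) = s :: selectedWord l e := rfl

lemma selectedWord_cons_false (s : B) (l : List B) (e : List Bool) :
    selectedWord (s :: l) (false :: e) = selectedWord l e := rfl

lemma njAux_cons (x : W) (s : B) (l : List B) (b : Bool) (e : List Bool) :
    njAux cs x (s :: l) (b :: e) =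
      (if cs.length (x * cs.simple s) = cs.length x + 1 then 0 else 1)
        + njAux cs (if b then x * cs.simple s else x) l e := rfl

lemma nmAux_cons (x : W) (s : B) (l : List B) (b : Bool) (e : List Bool) :
    nmAux cs x (s :: l) (b :: e) =
      (if cs.length (x * cs.simple s) = cs.length x + 1
        then (if b then 0 else 1) else (if b then 1 else 0))
        + nmAux cs (if b then x * cs.simple s else x) l e := rfl

lemma exists_selected_eraseIdx :
    ∀ (ω : List B) (e : List Bool) (j : ℕ),
      ∃ e' : List Bool, e'.length = e.length ∧
        selectedWord ω e' = (selectedWord ω e).eraseIdx j := by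
  intro ω
  induction ω with
  | nil =>
    intro e j
    exact ⟨e, rfl, by cases e <;> simp [selectedWord]⟩
  | cons s l ih =>
    intro e j
    cases e with
    | nil => exact ⟨[], rfl, by simp [selectedWord]⟩
    | cons b e =>
      cases b with
      | false =>
        obtain ⟨e'', h1, h2⟩ := ih e j
        exact ⟨false :: e'', by simp [h1], by simpa [selectedWord] using h2⟩
      | true =>
        cases j with
        | zero =>
          exact ⟨false :: e, by simp, by simp [selectedWord]⟩
        | succ j =>
          obtain ⟨e'', h1, h2⟩ := ih e j
          exact ⟨true :: e'', by simp [h1], by simpa [selectedWord] using h2⟩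

lemma subexpr_mul_refl (ω : List B) (e : List Bool) (t : W)
    (ht : cs.IsReflection t)
    (hlt : cs.length (subwordProd cs ω e * t) < cs.length (subwordProd cs ω e)) :
    ∃ e', e'.length = e.length ∧ subwordProd cs ω e' = subwordProd cs ω e * t := by
  obtain ⟨j, hj, hprod⟩ := LLAux.strong_exchange cs (selectedWord ω e) t ht hlt
  obtain ⟨e', h1, h2⟩ := exists_selected_eraseIdx ω e j
  refine ⟨e', h1, ?_⟩
  show cs.wordProd (selectedWord ω e') = _
  rw [h2, hprod]
  rfl

lemma selected_all_true : ∀ (ω : List B),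
    selectedWord ω (List.replicate ω.length true) = ω := by
  intro ω
  induction ω with
  | nil => rfl
  | cons s l ih => simpa [selectedWord, List.replicate] using ih

lemma exists_subexpr_of_bruhatLE (ω : List B) (u : W)
    (h : bruhatLE cs u (cs.wordProd ω)) :
    ∃ e : List Bool, e.length = ω.length ∧ subwordProd cs ω e = u := by
  unfold bruhatLE at h
  induction h using Relation.ReflTransGen.head_induction_on with
  | refl =>
    exact ⟨List.replicate ω.length true, by simp,
      by rw [subwordProd, selected_all_true]⟩
  | head h' hrest ih =>
    rename_i a c
    obtain ⟨⟨t, ht, hc⟩, hlen⟩ := h'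
    obtain ⟨e, he, hprod⟩ := ih
    have ha : c * t = a := by
      rw [hc, mul_assoc, ht.mul_self, mul_one]
    obtain ⟨e', he', hprod'⟩ := subexpr_mul_refl cs ω e t ht
      (by rw [hprod, ha]; exact hlen)
    exact ⟨e', he'.trans he, by rw [hprod', hprod, ha]⟩

lemma selectedWord_snoc :
    ∀ (ω : List B) (e : List Bool), e.length = ω.length → ∀ (s : B) (b : Bool),
      selectedWord (ω ++ [s]) (e ++ [b]) =
        selectedWord ω e ++ (if b then [s] else []) := by
  intro ω
  induction ω with
  | nil =>
    intro e he s b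
    rw [List.length_nil, List.length_eq_zero_iff] at he
    subst he
    cases b <;> rfl
  | cons a ω ih =>
    intro e he s b
    cases e with
    | nil => simp at he
    | cons b' e =>
      simp only [List.length_cons, Nat.add_right_cancel_iff] at he
      cases b' with
      | true =>
        rw [List.cons_append, List.cons_append, selectedWord_cons_true,
          selectedWord_cons_true, ih e he s b, List.cons_append]
      | false =>
        rw [List.cons_append, List.cons_append, selectedWord_cons_false,
          selectedWord_cons_false, ih e he s b]

lemma subwordProd_snoc_true (ω : List B) (e : List Bool) (he : e.length = ω.length) (s : B) :
    subwordProd cs (ω ++ [s]) (e ++ [true]) = subwordProd cs ω e * cs.simple s := by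
  show cs.wordProd _ = _
  rw [selectedWord_snoc ω e he s true]
  show cs.wordProd (selectedWord ω e ++ [s]) = _
  rw [cs.wordProd_append, cs.wordProd_singleton]
  rfl

lemma subwordProd_snoc_false (ω : List B) (e : List Bool) (he : e.length = ω.length) (s : B) :
    subwordProd cs (ω ++ [s]) (e ++ [false]) = subwordProd cs ω e := by
  show cs.wordProd _ = _
  rw [selectedWord_snoc ω e he s false]
  show cs.wordProd (selectedWord ω e ++ []) = _
  rw [List.append_nil]
  rfl

lemma njAux_snoc :
    ∀ (ω : List B) (e : List Bool), e.length = ω.length → ∀ (x : W) (s : B) (b : Bool),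
      njAux cs x (ω ++ [s]) (e ++ [b]) = njAux cs x ω e +
        (if cs.length ((x * subwordProd cs ω e) * cs.simple s)
           = cs.length (x * subwordProd cs ω e) + 1 then 0 else 1) := by
  intro ω
  induction ω with
  | nil =>
    intro e he x s b
    rw [List.length_nil, List.length_eq_zero_iff] at he
    subst he
    show njAux cs x [s] [b] = _
    rw [njAux_cons]
    have h1 : njAux cs (if b then x * cs.simple s else x) [] [] = 0 := by
      cases b <;> rfl
    have h2 : njAux cs x ([] : List B) ([] : List Bool) = 0 := rfl
    have h3 : x * subwordProd cs ([] : List B) ([] : List Bool) = x := by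
      show x * cs.wordProd (selectedWord [] []) = x
      show x * cs.wordProd [] = x
      rw [cs.wordProd_nil, mul_one]
    rw [h1, h2, h3]
    omega
  | cons a ω ih =>
    intro e he x s b
    cases e with
    | nil => simp at he
    | cons b' e =>
      simp only [List.length_cons, Nat.add_right_cancel_iff] at he
      rw [List.cons_append, List.cons_append, njAux_cons, njAux_cons]
      cases b' with
      | true =>
        simp only [if_true]
        rw [ih e he (x * cs.simple a) s b]
        have key : x * subwordProd cs (a :: ω) (true :: e)
            = (x * cs.simple a) * subwordProd cs ω e := by
          show x * cs.wordProd (selectedWord (a :: ω) (true :: e)) = _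
          rw [selectedWord_cons_true, cs.wordProd_cons, ← mul_assoc]
          rfl
        rw [key]
        omega
      | false =>
        simp only [Bool.false_eq_true, if_false]
        rw [ih e he x s b]
        have key : x * subwordProd cs (a :: ω) (false :: e)
            = x * subwordProd cs ω e := rfl
        rw [key]
        omega

lemma deg_formula :
    ∀ (ω : List B) (e : List Bool), e.length = ω.length → ∀ (x : W),
      ω.length + cs.length x
        = cs.length (x * subwordProd cs ω e) + nmAux cs x ω e + njAux cs x ω e := by
  intro ω
  induction ω with
  | nil =>
    intro e he x
    rw [List.length_nil, List.length_eq_zero_iff] at he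
    subst he
    have h3 : x * subwordProd cs ([] : List B) ([] : List Bool) = x := by
      show x * cs.wordProd (selectedWord [] []) = x
      show x * cs.wordProd [] = x
      rw [cs.wordProd_nil, mul_one]
    rw [h3]
    show (0 : ℕ) + cs.length x = cs.length x + 0 + 0
    omega
  | cons s l ih =>
    intro e he x
    cases e with
    | nil => simp at he
    | cons b e =>
      simp only [List.length_cons, Nat.add_right_cancel_iff] at he
      rw [njAux_cons, nmAux_cons]
      cases b with
      | true =>
        simp only [if_true]
        have key : x * subwordProd cs (s :: l) (true :: e)
            = (x * cs.simple s) * subwordProd cs l e := by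
          show x * cs.wordProd (selectedWord (s :: l) (true :: e)) = _
          rw [selectedWord_cons_true, cs.wordProd_cons, ← mul_assoc]
          rfl
        rw [key]
        have hIH := ih e he (x * cs.simple s)
        by_cases hc : cs.length (x * cs.simple s) = cs.length x + 1
        · rw [if_pos hc]
          simp only [List.length_cons]
          omega
        · have hdown : cs.length (x * cs.simple s) + 1 = cs.length x := by
            rcases cs.length_mul_simple x s with h | h
            · exact absurd h hc
            · exact h
          rw [if_neg hc]
          simp only [List.length_cons]
          omega
      | false =>
        simp only [Bool.false_eq_true, if_false]
        have key : x * subwordProd cs (s :: l) (false :: e)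
            = x * subwordProd cs l e := rfl
        rw [key]
        have hIH := ih e he x
        by_cases hc : cs.length (x * cs.simple s) = cs.length x + 1
        · rw [if_pos hc, if_pos hc]
          simp only [List.length_cons]
          omega
        · have hdown : cs.length (x * cs.simple s) + 1 = cs.length x := by
            rcases cs.length_mul_simple x s with h | h
            · exact absurd h hc
            · exact h
          rw [if_neg hc, if_neg hc]
          simp only [List.length_cons]
          omega

lemma exists_allup (ω : List B) : ∀ (u : W),
    (∃ e : List Bool, e.length = ω.length ∧ subwordProd cs ω e = u) →
    ∃ e : List Bool, e.length = ω.length ∧ njAux cs 1 ω e = 0 ∧ subwordProd cs ω e = u := by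
  induction ω using List.reverseRecOn with
  | nil =>
    rintro u ⟨e, he, hu⟩
    rw [List.length_nil, List.length_eq_zero_iff] at he
    subst he
    exact ⟨[], rfl, rfl, hu⟩
  | append_singleton ω s ih =>
    rintro u ⟨e, he, hu⟩
    have hne : e ≠ [] := by
      intro h; subst h; simp at he
    obtain ⟨e₀, b, rfl⟩ : ∃ f bb, e = f ++ [bb] :=
      ⟨e.dropLast, e.getLast hne, (List.dropLast_append_getLast hne).symm⟩
    have he₀ : e₀.length = ω.length := by simpa using he
    rcases cs.length_mul_simple u s with hup | hdown
    · -- ℓ(us) = ℓ(u) + 1 ; u ∈ SP(ω)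
      have hSP : ∃ e' : List Bool, e'.length = ω.length ∧ subwordProd cs ω e' = u := by
        cases b with
        | false =>
          rw [subwordProd_snoc_false cs ω e₀ he₀ s] at hu
          exact ⟨e₀, he₀, hu⟩
        | true =>
          rw [subwordProd_snoc_true cs ω e₀ he₀ s] at hu
          have hy : subwordProd cs ω e₀ = u * cs.simple s := by
            rw [← hu, mul_assoc, cs.simple_mul_simple_self, mul_one]
          have hlt : cs.length (subwordProd cs ω e₀ * cs.simple s)
              < cs.length (subwordProd cs ω e₀) := by
            rw [hy, mul_assoc, cs.simple_mul_simple_self, mul_one]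
            omega
          obtain ⟨e', h1, h2⟩ := subexpr_mul_refl cs ω e₀ (cs.simple s)
            (cs.isReflection_simple s) hlt
          refine ⟨e', h1.trans he₀, ?_⟩
          rw [h2, hy, mul_assoc, cs.simple_mul_simple_self, mul_one]
      obtain ⟨e₂, he₂, hnj₂, hp₂⟩ := ih u hSP
      refine ⟨e₂ ++ [false], by simp [he₂], ?_, ?_⟩
      · rw [njAux_snoc cs ω e₂ he₂ 1 s false, hnj₂, one_mul, hp₂, if_pos hup]
      · rw [subwordProd_snoc_false cs ω e₂ he₂ s, hp₂]
    · -- ℓ(us) + 1 = ℓ(u) ; u·s ∈ SP(ω)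
      have hSP : ∃ e' : List Bool, e'.length = ω.length ∧
          subwordProd cs ω e' = u * cs.simple s := by
        cases b with
        | true =>
          rw [subwordProd_snoc_true cs ω e₀ he₀ s] at hu
          refine ⟨e₀, he₀, ?_⟩
          rw [← hu, mul_assoc, cs.simple_mul_simple_self, mul_one]
        | false =>
          rw [subwordProd_snoc_false cs ω e₀ he₀ s] at hu
          have hlt : cs.length (subwordProd cs ω e₀ * cs.simple s)
              < cs.length (subwordProd cs ω e₀) := by
            rw [hu]; omega
          obtain ⟨e', h1, h2⟩ := subexpr_mul_refl cs ω e₀ (cs.simple s)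
            (cs.isReflection_simple s) hlt
          exact ⟨e', h1.trans he₀, by rw [h2, hu]⟩
      obtain ⟨e₂, he₂, hnj₂, hp₂⟩ := ih (u * cs.simple s) hSP
      refine ⟨e₂ ++ [true], by simp [he₂], ?_, ?_⟩
      · rw [njAux_snoc cs ω e₂ he₂ 1 s true, hnj₂, one_mul, hp₂]
        have : cs.length (u * cs.simple s * cs.simple s) = cs.length (u * cs.simple s) + 1 := by
          rw [mul_assoc, cs.simple_mul_simple_self, mul_one]
          omega
        rw [if_pos this]
      · rw [subwordProd_snoc_true cs ω e₂ he₂ s, hp₂, mul_assoc,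
          cs.simple_mul_simple_self, mul_one]

lemma allup_unique (ω : List B) : ∀ (u : W) (e₁ e₂ : List Bool),
    e₁.length = ω.length → e₂.length = ω.length →
    njAux cs 1 ω e₁ = 0 → njAux cs 1 ω e₂ = 0 →
    subwordProd cs ω e₁ = u → subwordProd cs ω e₂ = u → e₁ = e₂ := by
  induction ω using List.reverseRecOn with
  | nil =>
    intro u e₁ e₂ h1 h2 _ _ _ _
    rw [List.length_nil, List.length_eq_zero_iff] at h1 h2
    rw [h1, h2]
  | append_singleton ω s ih =>
    intro u e₁ e₂ h1 h2 hnj1 hnj2 hp1 hp2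
    have hne1 : e₁ ≠ [] := by intro h; subst h; simp at h1
    have hne2 : e₂ ≠ [] := by intro h; subst h; simp at h2
    obtain ⟨f₁, b₁, rfl⟩ : ∃ f b, e₁ = f ++ [b] :=
      ⟨e₁.dropLast, e₁.getLast hne1, (List.dropLast_append_getLast hne1).symm⟩
    obtain ⟨f₂, b₂, rfl⟩ : ∃ f b, e₂ = f ++ [b] :=
      ⟨e₂.dropLast, e₂.getLast hne2, (List.dropLast_append_getLast hne2).symm⟩
    have hf1 : f₁.length = ω.length := by simpa using h1
    have hf2 : f₂.length = ω.length := by simpa using h2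
    rw [njAux_snoc cs ω f₁ hf1 1 s b₁, one_mul] at hnj1
    rw [njAux_snoc cs ω f₂ hf2 1 s b₂, one_mul] at hnj2
    have hnj1' : njAux cs 1 ω f₁ = 0 := by omega
    have hnj2' : njAux cs 1 ω f₂ = 0 := by omega
    have hc1 : cs.length (subwordProd cs ω f₁ * cs.simple s)
        = cs.length (subwordProd cs ω f₁) + 1 := by
      by_contra h
      rw [if_neg h] at hnj1
      omega
    have hc2 : cs.length (subwordProd cs ω f₂ * cs.simple s)
        = cs.length (subwordProd cs ω f₂) + 1 := by
      by_contra h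
      rw [if_neg h] at hnj2
      omega
    have hchar : ∀ (f : List Bool), f.length = ω.length → ∀ (b : Bool),
        subwordProd cs (ω ++ [s]) (f ++ [b]) = u →
        cs.length (subwordProd cs ω f * cs.simple s) = cs.length (subwordProd cs ω f) + 1 →
        (b = true ↔ cs.length (u * cs.simple s) + 1 = cs.length u) := by
      intro f hf b hp hcl
      cases b with
      | true =>
        rw [subwordProd_snoc_true cs ω f hf s] at hp
        refine iff_of_true rfl ?_
        rw [← hp, mul_assoc, cs.simple_mul_simple_self, mul_one]
        omega
      | false =>
        rw [subwordProd_snoc_false cs ω f hf s] at hp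
        refine iff_of_false (by simp) ?_
        rw [← hp]
        omega
    have hb1 := hchar f₁ hf1 b₁ hp1 hc1
    have hb2 := hchar f₂ hf2 b₂ hp2 hc2
    have hbb : b₁ = b₂ := Bool.eq_iff_iff.mpr (hb1.trans hb2.symm)
    subst hbb
    have hyy : subwordProd cs ω f₁ = subwordProd cs ω f₂ := by
      cases b₁ with
      | false =>
        rw [subwordProd_snoc_false cs ω f₁ hf1 s] at hp1
        rw [subwordProd_snoc_false cs ω f₂ hf2 s] at hp2
        rw [hp1, hp2]
      | true =>
        rw [subwordProd_snoc_true cs ω f₁ hf1 s] at hp1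
        rw [subwordProd_snoc_true cs ω f₂ hf2 s] at hp2
        exact mul_right_cancel (hp1.trans hp2.symm)
    rw [ih (subwordProd cs ω f₁) f₁ f₂ hf1 hf2 hnj1' hnj2' rfl hyy.symm]


lemma ofFn_get_cast {α : Type*} (e : List α) (n : ℕ) (h : e.length = n) :
    List.ofFn (fun i : Fin n => e.get (Fin.cast h.symm i)) = e := by
  subst h
  simp

end LLAux

theorem unique_largest_light_leaf (cs : CoxeterSystem M W) (u v : W)
    (huv : bruhatLE cs u v) (vw : List B)
    (hv : cs.wordProd vw = v) (hred : cs.IsReduced vw) :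
    ∃! l : CLeaf cs vw u, leafDeg cs vw l = (cs.length v : ℤ) - (cs.length u : ℤ) := by
  classical
  have hlenv : cs.length v = vw.length := by rw [← hv]; exact hred
  have hbr : bruhatLE cs u (cs.wordProd vw) := by rw [hv]; exact huv
  obtain ⟨e, he, hnj, hprod⟩ := LLAux.exists_allup cs vw u
    (LLAux.exists_subexpr_of_bruhatLE cs vw u hbr)
  have hdeg : ∀ (l : CLeaf cs vw u) (el : List Bool), List.ofFn l.1 = el →
      el.length = vw.length → njAux cs 1 vw el = 0 →
      leafDeg cs vw l = (cs.length v : ℤ) - cs.length u := by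
    intro l el hel hlen hnj0
    have hF := LLAux.deg_formula cs vw el hlen 1
    have hu : subwordProd cs vw el = u := by rw [← hel]; exact l.2
    rw [one_mul, hu, cs.length_one] at hF
    unfold leafDeg leafNm leafNj
    rw [hel, hnj0]
    omega
  have hdeg' : ∀ (l : CLeaf cs vw u),
      leafDeg cs vw l = (cs.length v : ℤ) - cs.length u →
      njAux cs 1 vw (List.ofFn l.1) = 0 := by
    intro l hl
    have hlen : (List.ofFn l.1).length = vw.length := List.length_ofFn
    have hF := LLAux.deg_formula cs vw (List.ofFn l.1) hlen 1
    have hu : subwordProd cs vw (List.ofFn l.1) = u := l.2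
    rw [one_mul, hu, cs.length_one] at hF
    unfold leafDeg leafNm leafNj at hl
    omega
  refine ⟨⟨fun i => e.get (Fin.cast he.symm i), ?_⟩, ?_, ?_⟩
  · rw [LLAux.ofFn_get_cast e vw.length he]
    exact hprod
  · exact hdeg _ e (LLAux.ofFn_get_cast e vw.length he) he hnj
  · intro l' hl'
    have hnj' := hdeg' l' hl'
    have heq : List.ofFn l'.1 = e :=
      LLAux.allup_unique cs vw u (List.ofFn l'.1) e List.length_ofFn he hnj' hnj l'.2 hprod
    apply Subtype.ext
    apply List.ofFn_injective
    rw [heq, LLAux.ofFn_get_cast e vw.length he]
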